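/- Let u : [1,∞) × ℝ^{d-1} → [0,∞) be measurable with u(·,1) > 0 and α > 0. Suppose u(tx,y)/u(t,1) → x^{−α−1} h(y) for all x ≥ 1 and all y (one-component regular variation with index −α−1 and angular limit h, h(1)=1). Define Ū(x,y) = ∫_x^∞ u(z,y) dz (assumed finite). Then t·u(t,y)/Ū(t,1) → α·h(y) as t → ∞, and Ū is one-component regularly varying with index −α and the same angular limit h, i.e. Ū(tx,y)/Ū(t,1) → x^{−α} h(y). -/

import Mathlib

open Filter Topology MeasureTheory

lemma karamata_uct_upper (k : ℝ → ℝ) (hk : Measurable k) (c : ℝ)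
    (hconv : ∀ s : ℝ, 0 ≤ s → Tendsto (fun t => k (t + s) - k t) atTop (𝓝 (c * s)))
    {ε : ℝ} (hε : 0 < ε) :
    ∀ᶠ t in atTop, ∀ σ ∈ Set.Icc (0:ℝ) 1, k (t + σ) - k t ≤ c * σ + ε := by
  by_contra hcon
  rw [Filter.not_eventually] at hcon
  have hseq : ∀ n : ℕ, ∃ t, (n:ℝ) ≤ t ∧ ∃ σ, σ ∈ Set.Icc (0:ℝ) 1 ∧
      c * σ + ε < k (t + σ) - k t := by
    intro n
    rcases frequently_atTop.mp hcon (n:ℝ) with ⟨t, ht, hP⟩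
    push_neg at hP
    rcases hP with ⟨σ, hσ, hgt⟩
    exact ⟨t, ht, σ, hσ, hgt⟩
  choose t ht σ hσ hgt using hseq
  have htt : Tendsto t atTop atTop :=
    tendsto_atTop_mono ht tendsto_natCast_atTop_atTop
  set s : ℕ → ℝ := fun n => t n + σ n with hs_def
  have hst : Tendsto s atTop atTop := by
    apply tendsto_atTop_mono (f := t)
    · intro n; exact le_add_of_nonneg_right (hσ n).1
    · exact htt
  -- good sets
  set A : ℕ → Set ℝ := fun n =>
    Set.Icc (0:ℝ) 3 ∩ ⋂ m, ⋂ (_ : n ≤ m), {x | |k (t m + x) - k (t m) - c * x| ≤ ε/4}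
    with hA_def
  set B : ℕ → Set ℝ := fun n =>
    Set.Icc (0:ℝ) 2 ∩ ⋂ m, ⋂ (_ : n ≤ m), {x | |k (s m + x) - k (s m) - c * x| ≤ ε/4}
    with hB_def
  have hmeas_aux : ∀ (r : ℝ), MeasurableSet {x : ℝ | |k (r + x) - k r - c * x| ≤ ε/4} := by
    intro r
    have : Measurable fun x : ℝ => |k (r + x) - k r - c * x| :=
      (((hk.comp (measurable_const.add measurable_id)).sub measurable_const).sub
        (measurable_id.const_mul c)).abs
    exact measurableSet_le this measurable_const
  have hAmeas : ∀ n, MeasurableSet (A n) := fun n =>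
    measurableSet_Icc.inter (MeasurableSet.iInter fun m => MeasurableSet.iInter fun _ =>
      hmeas_aux (t m))
  have hBmeas : ∀ n, MeasurableSet (B n) := fun n =>
    measurableSet_Icc.inter (MeasurableSet.iInter fun m => MeasurableSet.iInter fun _ =>
      hmeas_aux (s m))
  have hAmono : Monotone A := by
    intro n n' hnn' x hx
    obtain ⟨hx1, hx2⟩ := hx
    simp only [Set.mem_iInter] at hx2
    exact ⟨hx1, by simp only [Set.mem_iInter]; exact fun m hm => hx2 m (hnn'.trans hm)⟩
  have hBmono : Monotone B := by
    intro n n' hnn' x hx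
    obtain ⟨hx1, hx2⟩ := hx
    simp only [Set.mem_iInter] at hx2
    exact ⟨hx1, by simp only [Set.mem_iInter]; exact fun m hm => hx2 m (hnn'.trans hm)⟩
  -- pointwise convergence gives union
  have key_union : ∀ (r : ℕ → ℝ), Tendsto r atTop atTop → ∀ x : ℝ, 0 ≤ x →
      ∃ n, ∀ m, n ≤ m → |k (r m + x) - k (r m) - c * x| ≤ ε/4 := by
    intro r hr x hx
    have h1 : Tendsto (fun m => k (r m + x) - k (r m)) atTop (𝓝 (c * x)) :=
      (hconv x hx).comp hr
    have h2 : Tendsto (fun m => |k (r m + x) - k (r m) - c * x|) atTop (𝓝 0) := by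
      have := (h1.sub_const (c * x)).abs
      simpa using this
    have h3 := h2.eventually_le_const (show (0:ℝ) < ε/4 by linarith)
    rcases eventually_atTop.mp h3 with ⟨n, hn⟩
    exact ⟨n, hn⟩
  have hAunion : ⋃ n, A n = Set.Icc (0:ℝ) 3 := by
    apply Set.Subset.antisymm
    · exact Set.iUnion_subset fun n x hx => hx.1
    · intro x hx
      rcases key_union t htt x hx.1 with ⟨n, hn⟩
      exact Set.mem_iUnion.mpr ⟨n, hx, by simp only [Set.mem_iInter]; exact fun m hm => hn m hm⟩
  have hBunion : ⋃ n, B n = Set.Icc (0:ℝ) 2 := by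
    apply Set.Subset.antisymm
    · exact Set.iUnion_subset fun n x hx => hx.1
    · intro x hx
      rcases key_union s hst x hx.1 with ⟨n, hn⟩
      exact Set.mem_iUnion.mpr ⟨n, hx, by simp only [Set.mem_iInter]; exact fun m hm => hn m hm⟩
  -- measures tend to full measure
  have hAtend : Tendsto (fun n => volume (A n)) atTop (𝓝 (ENNReal.ofReal 3)) := by
    have := tendsto_measure_iUnion_atTop (μ := volume) hAmono
    rwa [hAunion, Real.volume_Icc, show (3:ℝ) - 0 = 3 by ring] at this
  have hBtend : Tendsto (fun n => volume (B n)) atTop (𝓝 (ENNReal.ofReal 2)) := by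
    have := tendsto_measure_iUnion_atTop (μ := volume) hBmono
    rwa [hBunion, Real.volume_Icc, show (2:ℝ) - 0 = 2 by ring] at this
  have hAev := hAtend.eventually_const_lt
    (show ENNReal.ofReal 2 < ENNReal.ofReal 3 by
      exact ENNReal.ofReal_lt_ofReal_iff_of_nonneg (by norm_num) |>.mpr (by norm_num))
  have hBev := hBtend.eventually_const_lt
    (show ENNReal.ofReal 1 < ENNReal.ofReal 2 by
      exact ENNReal.ofReal_lt_ofReal_iff_of_nonneg (by norm_num) |>.mpr (by norm_num))
  rcases eventually_atTop.mp (hAev.and hBev) with ⟨n, hn⟩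
  obtain ⟨hAn, hBn⟩ := hn n le_rfl
  -- diff measures are small
  have hdiff : ∀ (S : Set ℝ) (a b : ℝ), 0 ≤ b → MeasurableSet S → S ⊆ Set.Icc (0:ℝ) a →
      volume (Set.Icc (0:ℝ) a) = ENNReal.ofReal b + ENNReal.ofReal 1 →
      ENNReal.ofReal b < volume S →
      volume (Set.Icc (0:ℝ) a \ S) < ENNReal.ofReal 1 := by
    intro S a b hb hSm hSsub hvol hlt
    have hsum : volume (Set.Icc (0:ℝ) a \ S) + volume S = volume (Set.Icc (0:ℝ) a) := by
      rw [← measure_union disjoint_sdiff_self_left hSm, Set.diff_union_of_subset hSsub]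
    by_contra hge
    push_neg at hge
    have : ENNReal.ofReal b + ENNReal.ofReal 1 < volume (Set.Icc (0:ℝ) a) := by
      calc ENNReal.ofReal b + ENNReal.ofReal 1
          < volume S + ENNReal.ofReal 1 :=
            (ENNReal.add_lt_add_iff_right (by simp)).mpr hlt
        _ ≤ volume S + volume (Set.Icc (0:ℝ) a \ S) := by gcongr
        _ = volume (Set.Icc (0:ℝ) a) := by rw [add_comm]; exact hsum
    rw [hvol] at this; exact lt_irrefl _ this
  have hAdiff : volume (Set.Icc (0:ℝ) 3 \ A n) < ENNReal.ofReal 1 := by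
    refine hdiff (A n) 3 2 (by norm_num) (hAmeas n) (fun x hx => hx.1) ?_ hAn
    rw [Real.volume_Icc, ← ENNReal.ofReal_add (by norm_num) (by norm_num)]; norm_num
  have hBdiff : volume (Set.Icc (0:ℝ) 2 \ B n) < ENNReal.ofReal 1 := by
    refine hdiff (B n) 2 1 (by norm_num) (hBmeas n) (fun x hx => hx.1) ?_ hBn
    rw [Real.volume_Icc, ← ENNReal.ofReal_add (by norm_num) (by norm_num)]; norm_num
  -- find a good point x
  have hexists : ∃ x ∈ Set.Icc (0:ℝ) 2, x ∈ B n ∧ x + σ n ∈ A n := by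
    by_contra hne
    push_neg at hne
    have hcover : Set.Icc (0:ℝ) 2 ⊆
        (Set.Icc (0:ℝ) 2 \ B n) ∪ ((fun x => x + σ n) ⁻¹' (Set.Icc (0:ℝ) 3 \ A n)) := by
      intro x hx
      by_cases hxB : x ∈ B n
      · right
        refine ⟨⟨?_, ?_⟩, fun hA => hne x hx hxB hA⟩
        · exact add_nonneg hx.1 (hσ n).1
        · have := hx.2; have := (hσ n).2; simp only [Set.mem_setOf_eq]; linarith
      · left; exact ⟨hx, hxB⟩
    have hm2 : volume (Set.Icc (0:ℝ) 2) ≤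
        volume (Set.Icc (0:ℝ) 2 \ B n) + volume ((fun x => x + σ n) ⁻¹' (Set.Icc (0:ℝ) 3 \ A n)) :=
      le_trans (measure_mono hcover) (measure_union_le _ _)
    rw [measure_preimage_add_right] at hm2
    have : volume (Set.Icc (0:ℝ) 2) < ENNReal.ofReal 1 + ENNReal.ofReal 1 :=
      lt_of_le_of_lt hm2 (ENNReal.add_lt_add hBdiff hAdiff)
    rw [Real.volume_Icc, ← ENNReal.ofReal_add (by norm_num) (by norm_num)] at this
    have h2 : (2:ℝ) - 0 = 2 := by ring
    rw [h2] at this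
    rw [show (1:ℝ)+1 = 2 by norm_num] at this
    exact lt_irrefl _ this
  rcases hexists with ⟨x, hx2, hxB, hxA⟩
  -- derive contradiction
  have hB_est : |k (s n + x) - k (s n) - c * x| ≤ ε/4 := by
    have := hxB.2
    simp only [Set.mem_iInter] at this
    exact this n le_rfl
  have hA_est : |k (t n + (x + σ n)) - k (t n) - c * (x + σ n)| ≤ ε/4 := by
    have := hxA.2
    simp only [Set.mem_iInter] at this
    exact this n le_rfl
  have harg : t n + (x + σ n) = s n + x := by simp only [hs_def]; ring
  rw [harg] at hA_est
  have hkey : k (t n + σ n) - k (t n) - c * σ n =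
      (k (s n + x) - k (t n) - c * (x + σ n)) - (k (s n + x) - k (s n) - c * x) := by
    simp only [hs_def]; ring
  have habs : |k (t n + σ n) - k (t n) - c * σ n| ≤ ε/4 + ε/4 := by
    rw [hkey]
    exact (abs_sub _ _).trans (add_le_add hA_est hB_est)
  have hgtn := hgt n
  have : ε < k (t n + σ n) - k (t n) - c * σ n := by linarith
  have := le_abs_self (k (t n + σ n) - k (t n) - c * σ n)
  linarith


lemma karamata_potter_add (k : ℝ → ℝ) (c : ℝ) {ε : ℝ} (hε : 0 < ε) (T : ℝ)
    (hT : ∀ t ≥ T, ∀ σ ∈ Set.Icc (0:ℝ) 1, k (t + σ) - k t ≤ c * σ + ε) :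
    ∀ t ≥ T, ∀ s, 0 ≤ s → k (t + s) - k t ≤ c * s + (s + 1) * ε := by
  have hind : ∀ n : ℕ, ∀ t ≥ T, ∀ s : ℝ, 0 ≤ s → s ≤ (n:ℝ) + 1 →
      k (t + s) - k t ≤ c * s + (n + 1) * ε := by
    intro n
    induction n with
    | zero =>
      intro t ht s hs hs1
      push_cast at hs1
      have := hT t ht s ⟨hs, by linarith⟩
      push_cast
      linarith
    | succ n ih =>
      intro t ht s hs hs1
      by_cases hsn : s ≤ (n:ℝ) + 1
      · have := ih t ht s hs hsn
        have : (n + 1 : ℝ) * ε ≤ (n + 1 + 1) * ε := by nlinarith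
        have := ih t ht s hs hsn
        push_cast at this ⊢
        nlinarith [ih t ht s hs hsn]
      · push_neg at hsn
        have hs1' : (0:ℝ) ≤ s - 1 := by
          have : (0:ℝ) ≤ (n:ℝ) := Nat.cast_nonneg n
          linarith
        have hstep : k (t + s) - k (t + (s - 1)) ≤ c * 1 + ε := by
          have := hT (t + (s - 1)) (by linarith) 1 ⟨by norm_num, le_rfl⟩
          have harg : t + (s - 1) + 1 = t + s := by ring
          rwa [harg] at this
        have hrest : k (t + (s - 1)) - k t ≤ c * (s - 1) + (n + 1) * ε := by
          apply ih t ht (s - 1) hs1'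
          push_cast at hs1 ⊢
          linarith
        push_cast
        linarith
  intro t ht s hs
  have h1 : s ≤ (⌊s⌋₊ : ℝ) + 1 := le_of_lt (Nat.lt_floor_add_one s)
  have h2 := hind ⌊s⌋₊ t ht s hs h1
  have h3 : ((⌊s⌋₊ : ℝ) + 1) * ε ≤ (s + 1) * ε := by
    have := Nat.floor_le hs
    nlinarith
  linarith

lemma karamata_potter_mul {m : ℕ} (u : ℝ → (Fin m → ℝ) → ℝ)
    (h : (Fin m → ℝ) → ℝ) (α : ℝ) (hα : 0 < α)
    (hu_meas : Measurable (Function.uncurry u))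
    (hu_pos : ∀ x, 1 ≤ x → 0 < u x 1)
    (h1 : h 1 = 1)
    (hRV : ∀ x, 1 ≤ x → ∀ y,
      Tendsto (fun t => u (t * x) y / u t 1) atTop (𝓝 (x ^ (-α - 1) * h y))) :
    ∃ T : ℝ, 1 ≤ T ∧ ∀ t ≥ T, ∀ x ≥ (1:ℝ),
      u (t * x) 1 ≤ Real.exp (α/2) * x ^ (-1 - α/2) * u t 1 := by
  set k : ℝ → ℝ := fun t => Real.log (u (Real.exp t) 1) with hk_def
  have hk_meas : Measurable k := by
    apply Real.measurable_log.comp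
    exact hu_meas.comp (Real.measurable_exp.prodMk measurable_const)
  have hconv : ∀ s : ℝ, 0 ≤ s →
      Tendsto (fun t => k (t + s) - k t) atTop (𝓝 ((-α - 1) * s)) := by
    intro s hs
    have hexps : (1:ℝ) ≤ Real.exp s := Real.one_le_exp hs
    have base := hRV (Real.exp s) hexps 1
    rw [h1, mul_one] at base
    have base' : Tendsto (fun t : ℝ => u (Real.exp t * Real.exp s) 1 / u (Real.exp t) 1)
        atTop (𝓝 (Real.exp s ^ (-α - 1))) := base.comp Real.tendsto_exp_atTop
    have hpos : (0:ℝ) < Real.exp s ^ (-α - 1) :=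
      Real.rpow_pos_of_pos (Real.exp_pos s) _
    have hlog := ((Real.continuousAt_log hpos.ne').tendsto).comp base'
    have hlim : Real.log (Real.exp s ^ (-α - 1)) = (-α - 1) * s := by
      rw [Real.log_rpow (Real.exp_pos s), Real.log_exp]
    rw [hlim] at hlog
    apply hlog.congr'
    filter_upwards [eventually_ge_atTop (0:ℝ)] with t ht
    have h1t : (1:ℝ) ≤ Real.exp t := Real.one_le_exp ht
    have h1ts : (1:ℝ) ≤ Real.exp (t + s) := Real.one_le_exp (by linarith)
    have hp1 : 0 < u (Real.exp (t + s)) 1 := hu_pos _ h1ts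
    have hp2 : 0 < u (Real.exp t) 1 := hu_pos _ h1t
    simp only [Function.comp]
    rw [← Real.exp_add] at *
    rw [Real.log_div hp1.ne' hp2.ne']
  have hε2 : (0:ℝ) < α/2 := by linarith
  have huct := karamata_uct_upper k hk_meas (-α - 1) hconv hε2
  rcases eventually_atTop.mp huct with ⟨T0, hT0⟩
  have hpotter := karamata_potter_add k (-α - 1) hε2 T0 hT0
  refine ⟨max (Real.exp T0) 1, le_max_right _ _, ?_⟩
  intro t ht x hx
  have ht1 : (1:ℝ) ≤ t := le_trans (le_max_right _ _) ht
  have ht0 : (0:ℝ) < t := by linarith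
  have hx0 : (0:ℝ) < x := by linarith
  have htx1 : (1:ℝ) ≤ t * x := by nlinarith
  have hlogt : T0 ≤ Real.log t := by
    have : Real.exp T0 ≤ t := le_trans (le_max_left _ _) ht
    calc T0 = Real.log (Real.exp T0) := (Real.log_exp T0).symm
    _ ≤ Real.log t := Real.log_le_log (Real.exp_pos T0) this
  have hlogx : 0 ≤ Real.log x := Real.log_nonneg hx
  have hP := hpotter (Real.log t) hlogt (Real.log x) hlogx
  have harg1 : Real.exp (Real.log t + Real.log x) = t * x := by
    rw [Real.exp_add, Real.exp_log ht0, Real.exp_log hx0]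
  have harg2 : Real.exp (Real.log t) = t := Real.exp_log ht0
  rw [hk_def] at hP
  simp only [harg1, harg2] at hP
  -- hP : log (u (t*x) 1) - log (u t 1) ≤ (-α-1) * log x + (log x + 1) * (α/2)
  have hux : 0 < u (t * x) 1 := hu_pos _ htx1
  have hut : 0 < u t 1 := hu_pos _ ht1
  have hexp : u (t * x) 1 ≤
      Real.exp (Real.log (u t 1) + ((-α - 1) * Real.log x + (Real.log x + 1) * (α/2))) := by
    calc u (t * x) 1 = Real.exp (Real.log (u (t * x) 1)) := (Real.exp_log hux).symm
    _ ≤ _ := Real.exp_le_exp.mpr (by linarith)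
  calc u (t * x) 1 ≤ _ := hexp
  _ = Real.exp (α/2) * x ^ (-1 - α/2) * u t 1 := by
      rw [Real.exp_add, Real.exp_log hut]
      have : (-α - 1) * Real.log x + (Real.log x + 1) * (α/2)
          = (-1 - α/2) * Real.log x + α/2 := by ring
      rw [this, Real.exp_add, Real.rpow_def_of_pos hx0, mul_comm (Real.log x)]
      ring

lemma karamata_key {m : ℕ} (u : ℝ → (Fin m → ℝ) → ℝ)
    (h : (Fin m → ℝ) → ℝ) (α : ℝ) (hα : 0 < α)
    (hu_meas : Measurable (Function.uncurry u))
    (hu_nonneg : ∀ x y, 1 ≤ x → 0 ≤ u x y)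
    (hu_pos : ∀ x, 1 ≤ x → 0 < u x 1)
    (h1 : h 1 = 1)
    (hRV : ∀ x, 1 ≤ x → ∀ y,
      Tendsto (fun t => u (t * x) y / u t 1) atTop (𝓝 (x ^ (-α - 1) * h y))) :
    ∀ y, Tendsto (fun t => (∫ z in Set.Ici t, u z y) / (t * u t 1)) atTop
      (𝓝 (h y * (1/α))) := by
  obtain ⟨T, hT1, hPot⟩ := karamata_potter_mul u h α hα hu_meas hu_pos h1 hRV
  intro y
  -- eventual comparison of u(·,y) with u(·,1)
  have hyr : Tendsto (fun t => u t y / u t 1) atTop (𝓝 (h y)) := by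
    have := hRV 1 le_rfl y
    rw [Real.one_rpow, one_mul] at this
    simpa using this
  set M : ℝ := |h y| + 1 with hM_def
  have hM0 : 0 < M := by positivity
  have hev : ∀ᶠ r in atTop, u r y / u r 1 < M :=
    hyr.eventually_lt_const (by rw [hM_def]; exact lt_of_le_of_lt (le_abs_self _) (by linarith))
  rcases eventually_atTop.mp hev with ⟨R, hR⟩
  set T2 : ℝ := max T (max R 1) with hT2_def
  have hT2_1 : (1:ℝ) ≤ T2 := le_trans (le_max_right R 1) (le_max_right T _)
  -- DCT
  have hexp : (-1 - α/2 : ℝ) < -1 := by linarith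
  have hbound_int : IntegrableOn (fun s : ℝ => M * Real.exp (α/2) * s ^ (-1 - α/2))
      (Set.Ioi (1:ℝ)) :=
    (integrableOn_Ioi_rpow_of_lt hexp one_pos).const_mul _
  have hdct : Tendsto (fun t => ∫ s in Set.Ioi (1:ℝ), u (t * s) y / u t 1) atTop
      (𝓝 (∫ s in Set.Ioi (1:ℝ), s ^ (-α - 1) * h y)) := by
    apply tendsto_integral_filter_of_dominated_convergence
      (fun s : ℝ => M * Real.exp (α/2) * s ^ (-1 - α/2))
    · filter_upwards with t
      exact ((hu_meas.comp ((measurable_id.const_mul t).prodMk measurable_const)).div_const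
        _).aestronglyMeasurable
    · filter_upwards [eventually_ge_atTop T2] with t ht
      filter_upwards [ae_restrict_mem measurableSet_Ioi] with s hs
      have hs1 : (1:ℝ) ≤ s := le_of_lt hs
      have ht1 : (1:ℝ) ≤ t := le_trans hT2_1 ht
      have htT : T ≤ t := le_trans (le_max_left _ _) ht
      have htR : R ≤ t := le_trans (le_trans (le_max_left R 1) (le_max_right T _)) ht
      have hts1 : (1:ℝ) ≤ t * s := by nlinarith
      have htsR : R ≤ t * s := by nlinarith
      have hut : 0 < u t 1 := hu_pos t ht1
      have huts1 : 0 < u (t * s) 1 := hu_pos _ hts1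
      have h_y : u (t * s) y ≤ M * u (t * s) 1 := by
        have := hR (t * s) htsR
        rw [div_lt_iff₀ huts1] at this
        linarith
      have h_pot : u (t * s) 1 ≤ Real.exp (α/2) * s ^ (-1 - α/2) * u t 1 :=
        hPot t htT s hs1
      have hnn : 0 ≤ u (t * s) y / u t 1 :=
        div_nonneg (hu_nonneg _ y hts1) hut.le
      rw [Real.norm_eq_abs, abs_of_nonneg hnn, div_le_iff₀ hut]
      calc u (t * s) y ≤ M * u (t * s) 1 := h_y
      _ ≤ M * (Real.exp (α/2) * s ^ (-1 - α/2) * u t 1) := by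
          apply mul_le_mul_of_nonneg_left h_pot hM0.le
      _ = M * Real.exp (α/2) * s ^ (-1 - α/2) * u t 1 := by ring
    · exact hbound_int
    · filter_upwards [ae_restrict_mem measurableSet_Ioi] with s hs
      exact hRV s (le_of_lt hs) y
  have hIval : (∫ s in Set.Ioi (1:ℝ), s ^ (-α - 1) * h y) = h y * (1/α) := by
    rw [MeasureTheory.integral_mul_const]
    rw [integral_Ioi_rpow_of_lt (by linarith : (-α - 1:ℝ) < -1) one_pos]
    rw [Real.one_rpow]
    field_simp
    rw [show (-α - 1 + 1 : ℝ) = -α by ring, div_neg, neg_neg, mul_div_cancel_left₀ _ hα.ne']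
  rw [hIval] at hdct
  apply hdct.congr'
  filter_upwards [eventually_ge_atTop (1:ℝ)] with t ht1
  have ht0 : (0:ℝ) < t := by linarith
  rw [MeasureTheory.integral_div]
  rw [integral_comp_mul_left_Ioi (fun z => u z y) 1 ht0]
  rw [mul_one, smul_eq_mul, ← MeasureTheory.integral_Ici_eq_integral_Ioi]
  rw [inv_mul_eq_div, div_div]

/-- Multivariate Karamata theorem, direct implication, `T = id`:
if `u(tx,y)/u(t,1) → x^{−α−1} h(y)` (`α > 0`, `h(1) = 1`) and
`Ū(x,y) = ∫_x^∞ u(z,y) dz` is finite, then `t·u(t,y)/Ū(t,1) → α·h(y)` and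
`Ū(tx,y)/Ū(t,1) → x^{−α} h(y)`. -/
theorem multivariate_karamata_direct {m : ℕ} (u : ℝ → (Fin m → ℝ) → ℝ)
    (h : (Fin m → ℝ) → ℝ) (α : ℝ) (hα : 0 < α)
    (hu_meas : Measurable (Function.uncurry u))
    (hu_nonneg : ∀ x y, 1 ≤ x → 0 ≤ u x y)
    (hu_pos : ∀ x, 1 ≤ x → 0 < u x 1)
    (h1 : h 1 = 1)
    (hint : ∀ x, 1 ≤ x → ∀ y, IntegrableOn (fun z => u z y) (Set.Ici x))
    (hRV : ∀ x, 1 ≤ x → ∀ y,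
      Tendsto (fun t => u (t * x) y / u t 1) atTop (𝓝 (x ^ (-α - 1) * h y))) :
    (∀ y, Tendsto (fun t => t * u t y / ∫ z in Set.Ici t, u z 1) atTop
        (𝓝 (α * h y))) ∧
    (∀ x, 1 ≤ x → ∀ y,
      Tendsto (fun t => (∫ z in Set.Ici (t * x), u z y) / ∫ z in Set.Ici t, u z 1)
        atTop (𝓝 (x ^ (-α) * h y))) := by
  have hkey := karamata_key u h α hα hu_meas hu_nonneg hu_pos h1 hRV
  set U : ℝ → ℝ := fun t => ∫ z in Set.Ici t, u z 1 with hU_def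
  have hB : Tendsto (fun t => (t * u t 1) / U t) atTop (𝓝 α) := by
    have h41 := hkey 1
    rw [h1, one_mul] at h41
    have hinv := h41.inv₀ (by positivity)
    rw [one_div, inv_inv] at hinv
    apply hinv.congr
    intro t
    rw [inv_div]
  constructor
  · intro y
    have hq : Tendsto (fun t => u t y / u t 1) atTop (𝓝 (h y)) := by
      have := hRV 1 le_rfl y
      rw [Real.one_rpow, one_mul] at this
      simpa using this
    have hprod : Tendsto (fun t => (u t y / u t 1) * ((t * u t 1) / U t)) atTop
        (𝓝 (h y * α)) := hq.mul hB
    have heq : (fun t => (u t y / u t 1) * ((t * u t 1) / U t)) =ᶠ[atTop]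
        (fun t => t * u t y / U t) := by
      filter_upwards [eventually_ge_atTop (1:ℝ)] with t ht
      have hut : u t 1 ≠ 0 := (hu_pos t ht).ne'
      rw [div_mul_div_comm,
        show u t y * (t * u t 1) = u t 1 * (t * u t y) by ring,
        show u t 1 * U t = u t 1 * U t from rfl,
        mul_div_mul_left _ _ hut]
    have hfin := hprod.congr' heq
    rwa [mul_comm (h y) α] at hfin
  · intro x hx y
    have hx0 : (0:ℝ) < x := lt_of_lt_of_le one_pos hx
    have htx : Tendsto (fun t : ℝ => t * x) atTop atTop := tendsto_id.atTop_mul_const hx0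
    have hA : Tendsto (fun t => (∫ z in Set.Ici (t * x), u z y) / ((t * x) * u (t * x) 1))
        atTop (𝓝 (h y * (1/α))) := (hkey y).comp htx
    have hr : Tendsto (fun t => u (t * x) 1 / u t 1) atTop (𝓝 (x ^ (-α - 1))) := by
      have := hRV x hx 1
      rwa [h1, mul_one] at this
    have hinner : Tendsto (fun t => x * (u (t * x) 1 / u t 1) * ((t * u t 1) / U t))
        atTop (𝓝 (x * x ^ (-α - 1) * α)) := (hr.const_mul x).mul hB
    have hprod := hA.mul hinner
    have hxpow : x * x ^ (-α - 1 : ℝ) = x ^ (-α : ℝ) := by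
      rw [show (-α : ℝ) = (-α - 1) + 1 by ring, Real.rpow_add_one (ne_of_gt hx0)]
      ring
    have hval : (h y * (1/α)) * (x * x ^ (-α - 1 : ℝ) * α) = x ^ (-α : ℝ) * h y := by
      rw [hxpow]
      field_simp
    rw [hval] at hprod
    have heq : (fun t => ((∫ z in Set.Ici (t * x), u z y) / ((t * x) * u (t * x) 1)) *
        (x * (u (t * x) 1 / u t 1) * ((t * u t 1) / U t))) =ᶠ[atTop]
        (fun t => (∫ z in Set.Ici (t * x), u z y) / U t) := by
      filter_upwards [eventually_ge_atTop (1:ℝ)] with t ht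
      have htx1 : (1:ℝ) ≤ t * x := by nlinarith
      have hb2 : u t 1 ≠ 0 := (hu_pos t ht).ne'
      have hb1 : u (t * x) 1 ≠ 0 := (hu_pos _ htx1).ne'
      have ht0 : t ≠ 0 := by intro h0; rw [h0] at ht; linarith
      rcases eq_or_ne (U t) 0 with hU | hU
      · simp [hU, div_zero, mul_zero]
      · field_simp
    exact hprod.congr' heq
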